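/- Let w̃ be an affine permutation of size n with decomposition w̃(i) = w(i) + n·r(i) (w ∈ S_n, r ∈ Q). Let j ∈ {1,...,n} be the largest index at which r attains its minimum value. Then ish(w̃⁻¹) = j + n·(−r(j) − 1). -/

import Mathlib

/-- For an affine permutation `w̃ = w + n·r`, if `j` is the largest index at which `r`
attains its minimum, then `ish(w̃⁻¹) = j + n(−r(j) − 1)`, where `ish(ṽ) = max ṽ(i) − n`
over the window. (Indices: the `0`-based `j : Fin n` corresponds to position `j+1`.) -/
theorem inverse_ish_formula (n : ℕ) (hn : 1 ≤ n) (f : Equiv.Perm ℤ)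
    (h1 : ∀ k : ℤ, f (k + n) = f k + n)
    (w : Equiv.Perm (Fin n)) (r : Fin n → ℤ) (hr : ∑ i, r i = 0)
    (hwindow : ∀ i : Fin n, f ((i : ℕ) + 1 : ℤ) = ((w i : ℕ) : ℤ) + 1 + n * r i)
    (j : Fin n) (hjmin : ∀ k : Fin n, r j ≤ r k)
    (hjmax : ∀ k : Fin n, r k = r j → k ≤ j) :
    (Finset.Icc (1 : ℤ) (n : ℤ)).sup'
        (Finset.nonempty_Icc.mpr (by exact_mod_cast hn)) (⇑f.symm) - n
      = ((j : ℕ) : ℤ) + 1 + n * (-r j - 1) := by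
  have h1' : ∀ k : ℤ, f.symm (k + n) = f.symm k + n := by
    intro k
    have h : f (f.symm k + n) = k + n := by rw [h1, Equiv.apply_symm_apply]
    calc f.symm (k + n) = f.symm (f (f.symm k + n)) := by rw [h]
      _ = f.symm k + n := Equiv.symm_apply_apply _ _
  have hshift : ∀ t : ℤ, ∀ k : ℤ, f.symm (k + n * t) = f.symm k + n * t := by
    intro t
    induction t using Int.induction_on with
    | zero => simp
    | succ m ih => intro k; rw [mul_add, mul_one, ← add_assoc, h1', ih, add_assoc]
    | pred m ih =>
        intro k
        have e1 : k + ↑n * (-(m:ℤ) - 1) + ↑n = k + ↑n * (-(m:ℤ)) := by ring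
        have := h1' (k + ↑n * (-(m:ℤ) - 1))
        rw [e1, ih k] at this
        linarith
  -- key computation: f.symm (w i + 1) = i + 1 - n * r i
  have hkey : ∀ i : Fin n, f.symm (((w i : ℕ) : ℤ) + 1) = ((i : ℕ) : ℤ) + 1 - n * r i := by
    intro i
    have h := hwindow i
    have : f.symm (((w i : ℕ) : ℤ) + 1 + n * r i) = ((i : ℕ) : ℤ) + 1 := by
      rw [← h, Equiv.symm_apply_apply]
    rw [hshift (r i) (((w i : ℕ) : ℤ) + 1)] at this
    linarith
  apply le_antisymm
  · rw [sub_le_iff_le_add]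
    apply Finset.sup'_le
    intro m hm
    rw [Finset.mem_Icc] at hm
    -- m = w i + 1 for i := w.symm ⟨m-1⟩
    have hlt : (m - 1).toNat < n := by omega
    set i : Fin n := w.symm ⟨(m - 1).toNat, hlt⟩ with hi
    have hwi : ((w i : ℕ) : ℤ) + 1 = m := by
      rw [hi, Equiv.apply_symm_apply]; simp; omega
    have := hkey i
    rw [hwi] at this
    rw [this]
    have hin : ((i : ℕ) : ℤ) + 1 ≤ n := by
      have := i.isLt; exact_mod_cast Nat.succ_le_of_lt this
    rcases eq_or_lt_of_le (hjmin i) with heq | hlt2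
    · have hij : i ≤ j := hjmax i heq.symm
      have : ((i : ℕ) : ℤ) ≤ ((j : ℕ) : ℤ) := by exact_mod_cast hij
      rw [← heq]; push_cast; linarith
    · have : r j + 1 ≤ r i := hlt2
      have hnr : (n : ℤ) * (r j + 1) ≤ n * r i :=
        mul_le_mul_of_nonneg_left this (by positivity)
      have hj0 : (0 : ℤ) ≤ ((j : ℕ) : ℤ) := by positivity
      nlinarith
  · have hmem : (((w j : ℕ) : ℤ) + 1) ∈ Finset.Icc (1 : ℤ) (n : ℤ) := by
      rw [Finset.mem_Icc]
      constructor
      · have := Int.natCast_nonneg (w j : ℕ); linarith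
      · have := (w j).isLt; exact_mod_cast Nat.succ_le_of_lt this
    have := Finset.le_sup' (f := (⇑f.symm)) hmem
    rw [hkey j] at this
    linarith
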